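/- Let p ≥ 2 and r ≥ 0. In the positive braid word w = ((σ_1 σ_2 ⋯ σ_{p-1})^p)^r (r full twists on p strands), any two distinct strands cross exactly 2r times. -/

import Mathlib

open scoped Classical

/-- The orbit of `x` under a permutation `π`: `{π^n x : n ∈ ℤ}`. -/
def permOrbit {α : Type*} (π : Equiv.Perm α) (x : α) : Set α := {y | π.SameCycle x y}

/-- The number of orbits of a permutation. -/
noncomputable def orbitCount {α : Type*} (π : Equiv.Perm α) : ℕ :=
  (Set.range (permOrbit π)).ncard

/-- The transposition of adjacent positions `i`, `i+1` (0-indexed) on `Fin p`,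
corresponding to the braid letter `σ_{i+1}`; identity if out of range. -/
def stepPerm (p i : ℕ) : Equiv.Perm (Fin p) :=
  if h : i + 1 < p then Equiv.swap ⟨i, Nat.lt_of_succ_lt h⟩ ⟨i + 1, h⟩ else 1

/-- Position-tracking: `posAfter p w t` is the position function after the first
`t` letters of the positive braid word `w` (letter `i` denotes `σ_{i+1}`). -/
def posAfter (p : ℕ) (w : List ℕ) (t : ℕ) : Equiv.Perm (Fin p) :=
  ((w.take t).map (stepPerm p)).foldl (fun a g => g * a) 1

/-- The underlying permutation of a positive braid word. -/
def permOf (p : ℕ) (w : List ℕ) : Equiv.Perm (Fin p) := posAfter p w w.length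

/-- The number of letters of `w` at which strands `s` and `s'` cross. -/
def crossCount (p : ℕ) (w : List ℕ) (s s' : Fin p) : ℕ :=
  ((Finset.range w.length).filter fun t =>
    ({(posAfter p w t s).val, (posAfter p w t s').val} : Finset ℕ)
      = {w.getD t 0, w.getD t 0 + 1}).card

/-- Concatenation of `q` copies of the word `u`. -/
def wordPow (u : List ℕ) (q : ℕ) : List ℕ := (List.replicate q u).flatten

/-- The word `σ_1 σ_2 ⋯ σ_{m-1}` (0-indexed letters `0,…,m-2`). -/
def ascBlock (m : ℕ) : List ℕ := List.range (m - 1)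

/-- The full twist word `(σ_1 ⋯ σ_{p-1})^p` on `p` strands. -/
def fullTwistWord (p : ℕ) : List ℕ := wordPow (ascBlock p) p

/-- The orbit of `x` under `π`, as a finset. -/
noncomputable def orbitFinset (p : ℕ) (π : Equiv.Perm (Fin p)) (x : Fin p) : Finset (Fin p) :=
  Finset.univ.filter fun y => π.SameCycle x y

/-- Total number of crossings in `w` between the strands of the component of `s`
and the strands of the component of `s'` (components w.r.t. `π`). -/
noncomputable def crossBetween (p : ℕ) (w : List ℕ) (π : Equiv.Perm (Fin p))
    (s s' : Fin p) : ℕ :=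
  ∑ x ∈ orbitFinset p π s, ∑ y ∈ orbitFinset p π s', crossCount p w x y

/-- Linking number of the components of `s` and `s'` in the closure of the positive
braid word `w`: half the number of crossings between them. -/
noncomputable def linking (p : ℕ) (w : List ℕ) (π : Equiv.Perm (Fin p))
    (s s' : Fin p) : ℕ :=
  crossBetween p w π s s' / 2

/-- The 3-cycle `(0 1 2)` on `Fin N`, fixing all other points. -/
def tau3 (N : ℕ) (h : 3 ≤ N) : Equiv.Perm (Fin N) :=
  Equiv.swap ⟨0, by omega⟩ ⟨2, by omega⟩ * Equiv.swap ⟨0, by omega⟩ ⟨1, by omega⟩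

/-- `Fin s` is equivalent to the points of `Fin N` with value `< s`. -/
def subEquiv (s N : ℕ) (h : s ≤ N) : Fin s ≃ {x : Fin N // (x : ℕ) < s} where
  toFun x := ⟨⟨x, lt_of_lt_of_le x.2 h⟩, x.2⟩
  invFun y := ⟨(y.1 : ℕ), y.2⟩
  left_inv x := rfl
  right_inv y := rfl

/-- The permutation of `Fin N` acting as `x ↦ x + c (mod s)` on `{0,…,s-1}` and
fixing all points `≥ s`. -/
def tauShift (s c N : ℕ) (h : s ≤ N) : Equiv.Perm (Fin N) :=
  (finRotate s ^ c).extendDomain (subEquiv s N h)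

namespace Stmt5Aux
open Finset

/-- Product of the step permutations of a word (rightmost letter applied last). -/
def P (p : ℕ) (l : List ℕ) : Equiv.Perm (Fin p) :=
  (l.map (stepPerm p)).foldl (fun a g => g * a) 1

lemma foldl_mul {p : ℕ} (l : List (Equiv.Perm (Fin p))) (x : Equiv.Perm (Fin p)) :
    l.foldl (fun a g => g * a) x = l.foldl (fun a g => g * a) 1 * x := by
  induction l generalizing x with
  | nil => simp
  | cons g l ih =>
    simp only [List.foldl_cons]
    rw [ih (g * x), ih (g * 1)]
    simp [mul_assoc]

lemma P_append (p : ℕ) (l₁ l₂ : List ℕ) : P p (l₁ ++ l₂) = P p l₂ * P p l₁ := by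
  unfold P
  rw [List.map_append, List.foldl_append, foldl_mul]

lemma P_single (p i : ℕ) : P p [i] = stepPerm p i := by
  simp [P]

lemma posAfter_eq_P (p : ℕ) (w : List ℕ) (t : ℕ) : posAfter p w t = P p (w.take t) := rfl

lemma wordPow_succ (u : List ℕ) (q : ℕ) : wordPow u (q + 1) = u ++ wordPow u q := by
  simp [wordPow, List.replicate_succ]

lemma P_wordPow (p : ℕ) (L : List ℕ) (b : ℕ) : P p (wordPow L b) = (P p L) ^ b := by
  induction b with
  | zero => simp [wordPow, P]
  | succ b ih => rw [wordPow_succ, P_append, ih, pow_succ]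

lemma wordPow_add (u : List ℕ) (a b : ℕ) :
    wordPow u (a + b) = wordPow u a ++ wordPow u b := by
  induction a with
  | zero => simp [wordPow]
  | succ a ih => rw [Nat.succ_add, wordPow_succ, wordPow_succ, ih, List.append_assoc]

lemma wordPow_wordPow (u : List ℕ) (m r : ℕ) :
    wordPow (wordPow u m) r = wordPow u (r * m) := by
  induction r with
  | zero => simp [wordPow]
  | succ r ih =>
    rw [wordPow_succ, ih]
    have hmm : (r + 1) * m = m + r * m := by ring
    rw [hmm, wordPow_add]

lemma length_wordPow (u : List ℕ) (q : ℕ) : (wordPow u q).length = q * u.length := by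
  induction q with
  | zero => simp [wordPow]
  | succ q ih => rw [wordPow_succ, List.length_append, ih]; ring

lemma take_wordPow (L : List ℕ) (n : ℕ) (hL : L.length = n) :
    ∀ (b q k : ℕ), k ≤ n → b < q →
      (wordPow L q).take (b * n + k) = wordPow L b ++ L.take k := by
  intro b
  induction b with
  | zero =>
    intro q k hk hb
    obtain ⟨q', rfl⟩ : ∃ q', q = q' + 1 := ⟨q - 1, by omega⟩
    rw [wordPow_succ]
    simp only [Nat.zero_mul, Nat.zero_add]
    rw [List.take_append_of_le_length (by omega)]
    simp [wordPow]
  | succ b ih =>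
    intro q k hk hb
    obtain ⟨q', rfl⟩ : ∃ q', q = q' + 1 := ⟨q - 1, by omega⟩
    rw [wordPow_succ]
    have hidx : (b + 1) * n + k = L.length + (b * n + k) := by rw [hL]; ring
    rw [hidx, List.take_length_add_append, ih q' k hk (by omega), wordPow_succ]
    simp

lemma getD_wordPow (L : List ℕ) (d : ℕ) :
    ∀ (b q k : ℕ), k < L.length → b < q →
      (wordPow L q).getD (b * L.length + k) d = L.getD k d := by
  intro b
  induction b with
  | zero =>
    intro q k hk hb
    obtain ⟨q', rfl⟩ : ∃ q', q = q' + 1 := ⟨q - 1, by omega⟩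
    rw [wordPow_succ]
    simpa using List.getD_append L (wordPow L q') d k hk
  | succ b ih =>
    intro q k hk hb
    obtain ⟨q', rfl⟩ : ∃ q', q = q' + 1 := ⟨q - 1, by omega⟩
    rw [wordPow_succ]
    have hidx : (b + 1) * L.length + k = L.length + (b * L.length + k) := by ring
    rw [hidx, List.getD_append_right L _ d _ (by omega)]
    have : L.length + (b * L.length + k) - L.length = b * L.length + k := by omega
    rw [this, ih q' k hk (by omega)]

/-- Value formula for the partial ascending block permutation. -/
lemma A_val (p : ℕ) : ∀ k < p, ∀ x : Fin p,
    ((P p (List.range k)) x).val =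
      if x.val = 0 then k else if x.val ≤ k then x.val - 1 else x.val := by
  intro k
  induction k with
  | zero =>
    intro hk x
    simp only [List.range_zero]
    have : P p ([] : List ℕ) = 1 := by simp [P]
    rw [this]
    simp only [Equiv.Perm.coe_one, id_eq]
    have := x.2
    split_ifs <;> omega
  | succ k ih =>
    intro hk x
    have hy := ih (by omega) x
    have hk1 : k + 1 < p := hk
    rw [List.range_succ, P_append, P_single]
    have hstep : stepPerm p k = Equiv.swap ⟨k, by omega⟩ ⟨k + 1, hk1⟩ := by
      simp [stepPerm, hk1]
    rw [hstep]
    simp only [Equiv.Perm.mul_apply]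
    set y := (P p (List.range k)) x with hy_def
    have hxval := x.2
    have hyval := y.2
    by_cases h1 : y = ⟨k, by omega⟩
    · have h1v : y.val = k := by rw [h1]
      rw [h1, Equiv.swap_apply_left]
      have hv1 : ((⟨k + 1, hk1⟩ : Fin p)).val = k + 1 := rfl
      rw [hv1]
      split_ifs at hy ⊢ <;> omega
    · by_cases h2 : y = ⟨k + 1, hk1⟩
      · have h2v : y.val = k + 1 := by rw [h2]
        rw [h2, Equiv.swap_apply_right]
        have hv2 : ((⟨k, by omega⟩ : Fin p)).val = k := rfl
        rw [hv2]
        split_ifs at hy ⊢ <;> omega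
      · rw [Equiv.swap_apply_of_ne_of_ne h1 h2]
        have h1v : y.val ≠ k := fun hc => h1 (Fin.ext hc)
        have h2v : y.val ≠ k + 1 := fun hc => h2 (Fin.ext hc)
        split_ifs at hy ⊢ <;> omega

lemma A_eq_iff_left (p k : ℕ) (hk : k + 1 < p) (x : Fin p) :
    ((P p (List.range k)) x).val = k ↔ x.val = 0 := by
  have h := A_val p k (by omega) x
  have := x.2
  split_ifs at h <;> omega

lemma A_eq_iff_right (p k : ℕ) (hk : k + 1 < p) (x : Fin p) :
    ((P p (List.range k)) x).val = k + 1 ↔ x.val = k + 1 := by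
  have h := A_val p k (by omega) x
  have := x.2
  split_ifs at h <;> omega

/-- The permutation of one full ascending block. -/
noncomputable def C (p : ℕ) : Equiv.Perm (Fin p) := P p (List.range (p - 1))

lemma C_val (p : ℕ) (hp : 2 ≤ p) (x : Fin p) :
    (C p x).val = if x.val = 0 then p - 1 else x.val - 1 := by
  have h := A_val p (p - 1) (by omega) x
  have := x.2
  unfold C
  split_ifs at h ⊢ <;> omega

lemma rot_C (p : ℕ) (hp : 2 ≤ p) (x : Fin p) : finRotate p (C p x) = x := by
  obtain ⟨m, rfl⟩ : ∃ m, p = m + 2 := ⟨p - 2, by omega⟩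
  have hC := C_val (m + 2) hp x
  rw [finRotate_succ_apply]
  apply Fin.ext
  rw [Fin.val_add, Fin.val_one']
  have h1 : 1 % (m + 2) = 1 := Nat.mod_eq_of_lt (by omega)
  rw [h1]
  have hx := x.2
  split_ifs at hC
  · rw [hC]
    have h2 : m + 2 - 1 + 1 = m + 2 := by omega
    rw [h2, Nat.mod_self]
    omega
  · rw [hC, Nat.mod_eq_of_lt (by omega)]
    omega

lemma C_eq_inv (p : ℕ) (hp : 2 ≤ p) : C p = (finRotate p)⁻¹ := by
  apply Equiv.ext
  intro x
  rw [Equiv.Perm.inv_def, eq_comm, Equiv.symm_apply_eq, rot_C p hp x]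

lemma rot_pow_val (p : ℕ) (hp : 2 ≤ p) (b : ℕ) :
    (((finRotate p) ^ b) (⟨0, by omega⟩ : Fin p)).val = b % p := by
  induction b with
  | zero => simp
  | succ b ih =>
    obtain ⟨m, hm⟩ : ∃ m, p = m + 1 := ⟨p - 1, by omega⟩
    subst hm
    rw [pow_succ', Equiv.Perm.mul_apply, finRotate_succ_apply, Fin.val_add, ih,
      Fin.val_one']
    exact (Nat.add_mod b 1 (m + 1)).symm

lemma Cpow_zero_iff (p : ℕ) (hp : 2 ≤ p) (b : ℕ) (x : Fin p) :
    (((C p) ^ b) x).val = 0 ↔ b % p = x.val := by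
  rw [C_eq_inv p hp, inv_pow]
  have h0 : ((((finRotate p) ^ b)⁻¹) x).val = 0 ↔ x = ((finRotate p) ^ b) ⟨0, by omega⟩ := by
    rw [show ((((finRotate p) ^ b)⁻¹) x).val = 0 ↔ (((finRotate p) ^ b)⁻¹) x = ⟨0, by omega⟩ from
      ⟨fun h => Fin.ext h, fun h => by rw [h]⟩]
    rw [Equiv.Perm.inv_def, Equiv.symm_apply_eq]
  rw [h0, Fin.ext_iff, rot_pow_val p hp b]
  exact eq_comm

lemma count_mod (p r v : ℕ) (hp : 0 < p) (hv : v < p) :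
    ((Finset.range (r * p)).filter (fun b => b % p = v)).card = r := by
  induction r with
  | zero => simp
  | succ r ih =>
    have hmul : (r + 1) * p = r * p + p := by ring
    rw [hmul, Finset.range_add, Finset.filter_union,
      Finset.card_union_of_disjoint, ih]
    · rw [Finset.filter_map, Finset.card_map]
      have hsingle : (Finset.range p).filter ((fun b => b % p = v) ∘ (addLeftEmbedding (r * p))) =
          {v} := by
        ext j
        simp only [Finset.mem_filter, Finset.mem_range, Function.comp_apply,
          addLeftEmbedding_apply, Finset.mem_singleton]
        constructor
        · rintro ⟨hj, hmod⟩
          have : (j + r * p) % p = j % p := Nat.add_mul_mod_self_right j r p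
          rw [Nat.add_comm] at this
          rw [this, Nat.mod_eq_of_lt hj] at hmod
          exact hmod
        · intro hjv
          refine ⟨by omega, ?_⟩
          rw [hjv]
          have h2 : (r * p + v) % p = v % p := by
            rw [Nat.add_comm]
            exact Nat.add_mul_mod_self_right v r p
          rw [h2, Nat.mod_eq_of_lt hv]
      rw [hsingle, Finset.card_singleton]
    · rw [Finset.disjoint_left]
      intro b hb hb'
      simp only [Finset.mem_filter, Finset.mem_range] at hb
      simp only [Finset.mem_filter, Finset.mem_map, addLeftEmbedding_apply] at hb'
      obtain ⟨⟨j, hj, hjb⟩, -⟩ := hb'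
      omega

lemma card_filter_range_mul (n q : ℕ) (cond : ℕ → Prop) [DecidablePred cond] :
    ((Finset.range (q * n)).filter (fun t => cond t)).card
      = ∑ b ∈ Finset.range q, ((Finset.range n).filter (fun k => cond (b * n + k))).card := by
  induction q with
  | zero => simp
  | succ q ih =>
    rw [Finset.sum_range_succ, ← ih]
    have hmul : (q + 1) * n = q * n + n := by ring
    rw [hmul, Finset.range_add, Finset.filter_union, Finset.card_union_of_disjoint]
    · congr 1
      rw [Finset.filter_map, Finset.card_map]
      have hfc : (Finset.range n).filter ((fun t => cond t) ∘ (addLeftEmbedding (q * n)))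
          = (Finset.range n).filter (fun k => cond (q * n + k)) := by
        apply Finset.filter_congr
        intro k hk
        simp [addLeftEmbedding_apply]
      rw [hfc]
    · rw [Finset.disjoint_left]
      intro b hb hb'
      simp only [Finset.mem_filter, Finset.mem_range] at hb
      simp only [Finset.mem_filter, Finset.mem_map, addLeftEmbedding_apply] at hb'
      obtain ⟨⟨j, hj, hjb⟩, -⟩ := hb'
      omega

lemma pair_eq_pair_iff (x y u v : ℕ) (huv : u ≠ v) :
    ({x, y} : Finset ℕ) = {u, v} ↔ (x = u ∧ y = v) ∨ (x = v ∧ y = u) := by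
  constructor
  · intro hEq
    have hx : x ∈ ({u, v} : Finset ℕ) := by rw [← hEq]; simp
    have hy : y ∈ ({u, v} : Finset ℕ) := by rw [← hEq]; simp
    have hu : u ∈ ({x, y} : Finset ℕ) := by rw [hEq]; simp
    have hv : v ∈ ({x, y} : Finset ℕ) := by rw [hEq]; simp
    simp only [Finset.mem_insert, Finset.mem_singleton] at hx hy hu hv
    omega
  · rintro (⟨rfl, rfl⟩ | ⟨rfl, rfl⟩)
    · rfl
    · exact Finset.pair_comm x y

lemma inner_count (p : ℕ) (hp : 2 ≤ p) (a a' : Fin p) (hne : a ≠ a') :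
    ((Finset.range (p - 1)).filter (fun k =>
        ({((P p (List.range k)) a).val, ((P p (List.range k)) a').val} : Finset ℕ)
          = {k, k + 1})).card
      = (if a.val = 0 then 1 else 0) + (if a'.val = 0 then 1 else 0) := by
  have hvals : a.val ≠ a'.val := fun hv => hne (Fin.ext hv)
  have ha := a.2
  have ha' := a'.2
  rw [Finset.filter_congr (q := fun k =>
      (a.val = 0 ∧ a'.val = k + 1) ∨ (a'.val = 0 ∧ a.val = k + 1)) ?_]
  · by_cases h0 : a.val = 0
    · have h0' : a'.val ≠ 0 := by omega
      rw [if_pos h0, if_neg h0']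
      have : (Finset.range (p - 1)).filter (fun k =>
          (a.val = 0 ∧ a'.val = k + 1) ∨ (a'.val = 0 ∧ a.val = k + 1)) = {a'.val - 1} := by
        ext k
        simp only [Finset.mem_filter, Finset.mem_range, Finset.mem_singleton]
        omega
      rw [this, Finset.card_singleton]
    · by_cases h0' : a'.val = 0
      · rw [if_neg h0, if_pos h0']
        have : (Finset.range (p - 1)).filter (fun k =>
            (a.val = 0 ∧ a'.val = k + 1) ∨ (a'.val = 0 ∧ a.val = k + 1)) = {a.val - 1} := by
          ext k
          simp only [Finset.mem_filter, Finset.mem_range, Finset.mem_singleton]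
          omega
        rw [this, Finset.card_singleton]
      · rw [if_neg h0, if_neg h0']
        have : (Finset.range (p - 1)).filter (fun k =>
            (a.val = 0 ∧ a'.val = k + 1) ∨ (a'.val = 0 ∧ a.val = k + 1)) = ∅ := by
          ext k
          simp only [Finset.mem_filter, Finset.mem_range, Finset.notMem_empty, iff_false]
          omega
        rw [this, Finset.card_empty]
  · intro k hk
    rw [Finset.mem_range] at hk
    have hk1 : k + 1 < p := by omega
    rw [pair_eq_pair_iff _ _ _ _ (by omega : k ≠ k + 1)]
    rw [A_eq_iff_left p k hk1 a, A_eq_iff_right p k hk1 a',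
      A_eq_iff_right p k hk1 a, A_eq_iff_left p k hk1 a']
    tauto

end Stmt5Aux

/-- In `r` full twists `((σ_1⋯σ_{p-1})^p)^r` on `p ≥ 2` strands, any two distinct
strands cross exactly `2r` times. -/
theorem stmt5 (p r : ℕ) (hp : 2 ≤ p) (s s' : Fin p) (h : s ≠ s') :
    crossCount p (wordPow (fullTwistWord p) r) s s' = 2 * r := by
  classical
  open Stmt5Aux in
  have hw : wordPow (fullTwistWord p) r = wordPow (List.range (p - 1)) (r * p) := by
    rw [fullTwistWord, ascBlock, wordPow_wordPow]
  set n := p - 1 with hn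
  set q := r * p with hq
  set L := List.range n with hLdef
  have hL : L.length = n := List.length_range
  have hlen : (wordPow L q).length = q * n := by rw [length_wordPow, hL]
  rw [crossCount, hw, hlen, card_filter_range_mul]
  have hstep : ∀ b ∈ Finset.range q,
      ((Finset.range n).filter (fun k =>
        ({(posAfter p (wordPow L q) (b * n + k) s).val,
          (posAfter p (wordPow L q) (b * n + k) s').val} : Finset ℕ)
          = {(wordPow L q).getD (b * n + k) 0, (wordPow L q).getD (b * n + k) 0 + 1})).card
      = (if (((C p) ^ b) s).val = 0 then 1 else 0)
        + (if (((C p) ^ b) s').val = 0 then 1 else 0) := by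
    intro b hb
    rw [Finset.mem_range] at hb
    have hcongr : ∀ k ∈ Finset.range n,
        (({(posAfter p (wordPow L q) (b * n + k) s).val,
          (posAfter p (wordPow L q) (b * n + k) s').val} : Finset ℕ)
          = {(wordPow L q).getD (b * n + k) 0, (wordPow L q).getD (b * n + k) 0 + 1})
        ↔ (({((P p (List.range k)) (((C p) ^ b) s)).val,
            ((P p (List.range k)) (((C p) ^ b) s')).val} : Finset ℕ) = {k, k + 1}) := by
      intro k hk
      rw [Finset.mem_range] at hk
      have hpos : posAfter p (wordPow L q) (b * n + k) = P p (List.range k) * (C p) ^ b := by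
        have htake : L.take k = List.range k := by
          rw [hLdef, List.take_range]
          congr 1
          omega
        have hCL : P p L = C p := by rw [hLdef, hn]; rfl
        rw [posAfter_eq_P, take_wordPow L n hL b q k (by omega) hb, P_append, P_wordPow,
          htake, hCL]
      have hgetD : (wordPow L q).getD (b * n + k) 0 = k := by
        have := getD_wordPow L 0 b q k (by omega) hb
        rw [hL] at this
        rw [this, hLdef]
        rw [List.getD_eq_getElem _ _ (by rw [hL]; omega)]
        simp
      rw [hpos, hgetD]
      simp [Equiv.Perm.mul_apply]
    rw [Finset.filter_congr hcongr]
    exact inner_count p hp _ _ (fun hcontra => h (by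
      have := Equiv.injective ((C p) ^ b) hcontra
      exact this))
  rw [Finset.sum_congr rfl hstep, Finset.sum_add_distrib]
  have hcount : ∀ x : Fin p,
      (∑ b ∈ Finset.range q, if (((C p) ^ b) x).val = 0 then 1 else 0) = r := by
    intro x
    rw [← Finset.card_filter]
    have : (Finset.range q).filter (fun b => (((C p) ^ b) x).val = 0)
        = (Finset.range (r * p)).filter (fun b => b % p = x.val) := by
      apply Finset.filter_congr
      intro b hb
      exact Cpow_zero_iff p hp b x
    rw [this, count_mod p r x.val (by omega) x.2]
  rw [hcount s, hcount s']
  ring
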